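/- Let E be uniformly distributed on [0,1] and, conditionally on E = ε, let B1, ..., Bn be i.i.d. Bernoulli(ε). Then E[(E − E[E | B1,...,Bn])²] ≥ ∫₀¹ (ε(1−ε)/n − (1/(n/2+1))·√(ε(1−ε)/n)) dε. -/

import Mathlib

open MeasureTheory ProbabilityTheory Finset intervalIntegral
open scoped NNReal ENNReal

namespace Stmt12

variable {n : ℕ}

noncomputable def kT (b : Fin n → Bool) : ℕ := (Finset.univ.filter fun i => b i = true).card
noncomputable def kF (b : Fin n → Bool) : ℕ := (Finset.univ.filter fun i => b i = false).card
noncomputable def w (b : Fin n → Bool) (ε : ℝ) : ℝ := ε ^ kT b * (1 - ε) ^ kF b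

lemma kT_add_kF (b : Fin n → Bool) : kT b + kF b = n := by
  have := Finset.card_filter_add_card_filter_not (s := (Finset.univ : Finset (Fin n)))
    (p := fun i => b i = true)
  simpa [kT, kF] using this

lemma kT_le (b : Fin n → Bool) : kT b ≤ n := by
  simpa [kT] using Finset.card_filter_le (Finset.univ : Finset (Fin n)) (fun i => b i = true)

lemma sum_prod_bool (F : Fin n → Bool → ℝ) :
    ∑ b : Fin n → Bool, ∏ i, F i (b i) = ∏ i, (F i true + F i false) := by
  have h := Finset.sum_prod_piFinset (Finset.univ : Finset Bool) F
  rw [← Fintype.piFinset_univ] at *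
  rw [h]
  congr 1
  ext i
  simp [Fintype.sum_bool]

lemma prod_ite_eq_w (b : Fin n → Bool) (ε : ℝ) :
    ∏ i, (if b i then ε else 1 - ε) = w b ε := by
  rw [Finset.prod_ite (f := fun _ => ε) (g := fun _ => 1 - ε)]
  simp only [Finset.prod_const, w, kT, kF]
  congr 2
  refine congrArg Finset.card ?_
  apply Finset.filter_congr
  intro i _
  simp

lemma sum_w (ε : ℝ) : ∑ b : Fin n → Bool, w b ε = 1 := by
  have := sum_prod_bool (n := n) (fun _ x => if x then ε else 1 - ε)
  simp only [prod_ite_eq_w] at this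
  rw [this]
  simp


/-- off/on-diagonal covariance computation -/
lemma cov_sum (ε : ℝ) (i j : Fin n) :
    ∑ b : Fin n → Bool, (ε - (if b i then 1 else 0)) * (ε - (if b j then 1 else 0)) * w b ε
      = if i = j then ε * (1 - ε) else 0 := by
  classical
  set d : Bool → ℝ := fun x => ε - (if x then 1 else 0) with hd
  set H : Fin n → Bool → ℝ := fun l x =>
    (if l = i then d x else 1) * (if l = j then d x else 1) * (if x then ε else 1 - ε) with hH
  have hrw : ∀ b : Fin n → Bool,
      (ε - (if b i then 1 else 0)) * (ε - (if b j then 1 else 0)) * w b ε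
        = ∏ l, H l (b l) := by
    intro b
    simp only [hH, Finset.prod_mul_distrib]
    rw [Finset.prod_ite_eq' Finset.univ i (fun l => d (b l)),
        Finset.prod_ite_eq' Finset.univ j (fun l => d (b l)), prod_ite_eq_w]
    simp [hd]
  rw [Finset.sum_congr rfl (fun b _ => hrw b), sum_prod_bool]
  by_cases hij : i = j
  · subst hij
    simp only [if_pos rfl]
    have : ∀ l, H l true + H l false = if l = i then ε * (1 - ε) else 1 := by
      intro l
      by_cases hl : l = i <;> simp [hH, hd, hl] <;> ring
    rw [Finset.prod_congr rfl (fun l _ => this l), Finset.prod_ite_eq' Finset.univ i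
      (fun _ => ε * (1 - ε))]
    simp
  · rw [if_neg hij]
    apply Finset.prod_eq_zero (Finset.mem_univ i)
    simp [hH, hd, hij, Ne.symm hij]
    ring

lemma sum_sq_dev (hn : 0 < n) (ε : ℝ) :
    ∑ b : Fin n → Bool, (ε - (kT b : ℝ) / n)^2 * w b ε = ε * (1 - ε) / n := by
  classical
  have hsum : ∀ b : Fin n → Bool, (∑ i, (ε - (if b i then (1:ℝ) else 0))) = n * ε - kT b := by
    intro b
    rw [Finset.sum_sub_distrib]
    simp [kT, Finset.sum_boole]
  have hne : (n : ℝ) ≠ 0 := Nat.cast_ne_zero.mpr hn.ne'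
  have key : ∀ b : Fin n → Bool, (ε - (kT b : ℝ) / n)^2 * w b ε
      = (1 / (n:ℝ)^2) * ∑ i, ∑ j,
          ((ε - (if b i then 1 else 0)) * (ε - (if b j then 1 else 0)) * w b ε) := by
    intro b
    have h2 : ∑ i : Fin n, ∑ j : Fin n,
        ((ε - (if b i then (1:ℝ) else 0)) * (ε - (if b j then 1 else 0)) * w b ε)
        = (∑ i : Fin n, ∑ j : Fin n,
            (ε - (if b i then (1:ℝ) else 0)) * (ε - (if b j then 1 else 0))) * w b ε := by
      rw [Finset.sum_mul]
      exact Finset.sum_congr rfl fun i _ => by rw [Finset.sum_mul]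
    rw [h2, ← Finset.sum_mul_sum, hsum b]
    field_simp
  rw [Finset.sum_congr rfl (fun b _ => key b), ← Finset.mul_sum]
  have hswap : ∑ b : Fin n → Bool, ∑ i : Fin n, ∑ j : Fin n,
      ((ε - (if b i then (1:ℝ) else 0)) * (ε - (if b j then 1 else 0)) * w b ε)
      = ∑ i : Fin n, ∑ j : Fin n, ∑ b : Fin n → Bool,
      ((ε - (if b i then (1:ℝ) else 0)) * (ε - (if b j then 1 else 0)) * w b ε) := by
    rw [Finset.sum_comm]
    exact Finset.sum_congr rfl fun i _ => Finset.sum_comm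
  rw [hswap]
  have : ∀ i : Fin n, ∑ j : Fin n, ∑ b : Fin n → Bool,
      ((ε - (if b i then (1:ℝ) else 0)) * (ε - (if b j then 1 else 0)) * w b ε)
      = ε * (1 - ε) := by
    intro i
    rw [Finset.sum_congr rfl (fun j _ => cov_sum ε i j)]
    simp
  rw [Finset.sum_congr rfl (fun i _ => this i), Finset.sum_const]
  simp only [Finset.card_univ, Fintype.card_fin, nsmul_eq_mul]
  field_simp


lemma pointwise_bound (hn : 0 < n) {ε : ℝ} (hε : ε ∈ Set.Icc (0:ℝ) 1) :
    ε * (1 - ε) / n - (1 / ((n : ℝ) / 2 + 1)) * Real.sqrt (ε * (1 - ε) / n)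
      ≤ ∑ b : Fin n → Bool, (ε - ((kT b : ℝ) + 1) / ((n : ℝ) + 2))^2 * w b ε := by
  obtain ⟨hε0, hε1⟩ := hε
  have hnpos : (0:ℝ) < n := Nat.cast_pos.mpr hn
  have hw0 : ∀ b : Fin n → Bool, 0 ≤ w b ε :=
    fun b => mul_nonneg (pow_nonneg hε0 _) (pow_nonneg (by linarith) _)
  have hq0 : 0 ≤ ε * (1 - ε) / n :=
    div_nonneg (mul_nonneg hε0 (by linarith)) hnpos.le
  -- |kT/n - (kT+1)/(n+2)| ≤ 1/(n+2)
  have hbias : ∀ b : Fin n → Bool,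
      |(kT b : ℝ) / n - ((kT b : ℝ) + 1) / ((n : ℝ) + 2)| ≤ 1 / ((n:ℝ) + 2) := by
    intro b
    have hk0 : (0:ℝ) ≤ (kT b : ℝ) := Nat.cast_nonneg _
    have hkn : (kT b : ℝ) ≤ n := Nat.cast_le.mpr (kT_le b)
    have habs : |2*(kT b:ℝ) - n| ≤ n := abs_le.mpr ⟨by linarith, by linarith⟩
    have heq : (kT b : ℝ) / n - ((kT b : ℝ) + 1) / ((n : ℝ) + 2)
        = (2*(kT b:ℝ) - n)/((n:ℝ)*((n:ℝ)+2)) := by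
      field_simp
      ring
    have hpos2 : (0:ℝ) < (n:ℝ)*((n:ℝ)+2) := mul_pos hnpos (by linarith)
    rw [heq, abs_div, abs_of_pos hpos2, div_le_div_iff₀ hpos2 (by linarith)]
    have h7 : 2*(kT b:ℝ) - n ≤ n := (abs_le.mp habs).2
    nlinarith
  -- pointwise per-atom bound
  have hatom : ∀ b : Fin n → Bool,
      ((ε - (kT b : ℝ)/n)^2 - (2/((n:ℝ)+2)) * |ε - (kT b : ℝ)/n|) * w b ε
        ≤ (ε - ((kT b : ℝ) + 1) / ((n : ℝ) + 2))^2 * w b ε := by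
    intro b
    apply mul_le_mul_of_nonneg_right _ (hw0 b)
    set x := ε - (kT b : ℝ)/n with hx
    set y := (kT b : ℝ)/n - ((kT b : ℝ) + 1) / ((n : ℝ) + 2) with hy
    have h1 : (ε - ((kT b : ℝ) + 1) / ((n : ℝ) + 2)) = x + y := by rw [hx, hy]; ring
    rw [h1]
    have h3 : |y| ≤ 1/((n:ℝ)+2) := hbias b
    clear_value x y
    have h4 : -(|x| * (1/((n:ℝ)+2))) ≤ x * y := by
      have h5 : -|x * y| ≤ x * y := neg_abs_le _
      rw [abs_mul] at h5
      have h6 : |x| * |y| ≤ |x| * (1/((n:ℝ)+2)) :=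
        mul_le_mul_of_nonneg_left h3 (abs_nonneg x)
      linarith
    have expand : (x+y)^2 = x^2 + 2*(x*y) + y^2 := by ring
    have h8 : (2/((n:ℝ)+2))*|x| = 2*(|x| * (1/((n:ℝ)+2))) := by ring
    rw [expand, h8]
    linarith [h4, sq_nonneg y]
  -- Cauchy-Schwarz
  have hCS : ∑ b : Fin n → Bool, |ε - (kT b : ℝ)/n| * w b ε
      ≤ Real.sqrt (ε * (1 - ε) / n) := by
    have hcs := Finset.sum_mul_sq_le_sq_mul_sq Finset.univ
      (fun b : Fin n → Bool => |ε - (kT b : ℝ)/n| * Real.sqrt (w b ε))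
      (fun b : Fin n → Bool => Real.sqrt (w b ε))
    have heq : ∀ b : Fin n → Bool,
        (|ε - (kT b : ℝ)/n| * Real.sqrt (w b ε)) * Real.sqrt (w b ε)
          = |ε - (kT b : ℝ)/n| * w b ε := by
      intro b
      rw [mul_assoc, Real.mul_self_sqrt (hw0 b)]
    have heq2 : ∀ b : Fin n → Bool,
        (|ε - (kT b : ℝ)/n| * Real.sqrt (w b ε))^2 = (ε - (kT b : ℝ)/n)^2 * w b ε := by
      intro b
      rw [mul_pow, Real.sq_sqrt (hw0 b), sq_abs]
    have heq3 : ∀ b : Fin n → Bool, (Real.sqrt (w b ε))^2 = w b ε :=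
      fun b => Real.sq_sqrt (hw0 b)
    rw [Finset.sum_congr rfl (fun b _ => heq b), Finset.sum_congr rfl (fun b _ => heq2 b),
        Finset.sum_congr rfl (fun b _ => heq3 b), sum_sq_dev hn ε, sum_w ε, mul_one] at hcs
    have hnn : 0 ≤ ∑ b : Fin n → Bool, |ε - (kT b : ℝ)/n| * w b ε :=
      Finset.sum_nonneg fun b _ => mul_nonneg (abs_nonneg _) (hw0 b)
    exact (Real.le_sqrt hnn hq0).mpr hcs
  calc ε * (1 - ε) / n - (1 / ((n : ℝ) / 2 + 1)) * Real.sqrt (ε * (1 - ε) / n)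
      = ∑ b : Fin n → Bool, (ε - (kT b : ℝ)/n)^2 * w b ε
        - (2/((n:ℝ)+2)) * Real.sqrt (ε * (1 - ε) / n) := by
        rw [sum_sq_dev hn ε, show (1 / ((n : ℝ) / 2 + 1)) = 2/((n:ℝ)+2) by
          rw [div_eq_div_iff (by positivity) (by positivity)]; ring]
    _ ≤ ∑ b : Fin n → Bool, (ε - (kT b : ℝ)/n)^2 * w b ε
        - (2/((n:ℝ)+2)) * ∑ b : Fin n → Bool, |ε - (kT b : ℝ)/n| * w b ε := by
        have h2 : (0:ℝ) ≤ 2/((n:ℝ)+2) := by positivity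
        nlinarith [hCS]
    _ = ∑ b : Fin n → Bool,
        ((ε - (kT b : ℝ)/n)^2 - (2/((n:ℝ)+2)) * |ε - (kT b : ℝ)/n|) * w b ε := by
        rw [Finset.mul_sum, ← Finset.sum_sub_distrib]
        exact Finset.sum_congr rfl fun b _ => by ring
    _ ≤ _ := Finset.sum_le_sum fun b _ => hatom b


lemma cont_pq (p q : ℕ) : Continuous (fun x : ℝ => x^p * (1-x)^q) :=
  (continuous_pow p).mul ((continuous_const.sub continuous_id).pow q)

lemma beta_step (a c : ℕ) :
    ∫ x in Set.Icc (0:ℝ) 1, x^(a+1) * (1-x)^c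
      = (((a:ℝ)+1)/((a:ℝ)+(c:ℝ)+2)) * ∫ x in Set.Icc (0:ℝ) 1, x^a * (1-x)^c := by
  have hIc : ∀ (p q : ℕ), IntervalIntegrable (fun x : ℝ => x^p * (1-x)^q) volume 0 1 :=
    fun p q => (cont_pq p q).intervalIntegrable 0 1
  set J0 := ∫ x in (0:ℝ)..1, x^a * (1-x)^c with hJ0
  set J1 := ∫ x in (0:ℝ)..1, x^(a+1) * (1-x)^c with hJ1
  have hderiv : ∀ x ∈ Set.uIcc (0:ℝ) 1,
      HasDerivAt (fun x : ℝ => x^(a+1) * (1-x)^(c+1))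
        (((a:ℝ)+1) * (x^a * (1-x)^(c+1)) - ((c:ℝ)+1) * (x^(a+1) * (1-x)^c)) x := by
    intro x _
    have h1 : HasDerivAt (fun x : ℝ => x^(a+1)) (((a:ℝ)+1) * x^a) x := by
      simpa using hasDerivAt_pow (a+1) x
    have h3 : HasDerivAt (fun x : ℝ => 1 - x) (-1) x := by
      simpa using (hasDerivAt_id x).const_sub (1:ℝ)
    have h2 : HasDerivAt (fun x : ℝ => (1-x)^(c+1)) (-(((c:ℝ)+1) * (1-x)^c)) x := by
      have := (hasDerivAt_pow (c+1) ((1:ℝ)-x)).comp x h3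
      exact this.congr_deriv (by push_cast; ring)
    have := h1.mul h2
    exact this.congr_deriv (by ring)
  have key : ∫ x in (0:ℝ)..1,
      (((a:ℝ)+1) * (x^a * (1-x)^(c+1)) - ((c:ℝ)+1) * (x^(a+1) * (1-x)^c)) = 0 := by
    rw [intervalIntegral.integral_eq_sub_of_hasDerivAt hderiv]
    · simp
    · apply Continuous.intervalIntegrable
      exact ((continuous_const.mul (cont_pq a (c+1))).sub (continuous_const.mul (cont_pq (a+1) c)))
  have split : ∫ x in (0:ℝ)..1, x^a * (1-x)^(c+1) = J0 - J1 := by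
    rw [hJ0, hJ1, ← intervalIntegral.integral_sub (hIc a c) (hIc (a+1) c)]
    apply intervalIntegral.integral_congr
    intro x _
    simp only [pow_succ]
    ring
  have key2 : ((a:ℝ)+1) * (J0 - J1) - ((c:ℝ)+1) * J1 = 0 := by
    have e1 : ∫ x in (0:ℝ)..1,
        (((a:ℝ)+1) * (x^a * (1-x)^(c+1)) - ((c:ℝ)+1) * (x^(a+1) * (1-x)^c))
        = ((a:ℝ)+1) * (∫ x in (0:ℝ)..1, x^a * (1-x)^(c+1)) - ((c:ℝ)+1) * J1 := by
      rw [intervalIntegral.integral_sub ((hIc a (c+1)).const_mul _) ((hIc (a+1) c).const_mul _),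
        intervalIntegral.integral_const_mul, intervalIntegral.integral_const_mul]
    rw [e1, split] at key
    linarith
  have hIcc : ∀ (p q : ℕ), ∫ x in Set.Icc (0:ℝ) 1, x^p * (1-x)^q
      = ∫ x in (0:ℝ)..1, x^p * (1-x)^q := by
    intro p q
    rw [MeasureTheory.integral_Icc_eq_integral_Ioc, intervalIntegral.integral_of_le zero_le_one]
  rw [hIcc, hIcc, ← hJ0, ← hJ1]
  have hden : (a:ℝ)+(c:ℝ)+2 ≠ 0 := by positivity
  field_simp
  linarith

lemma atom_integral {Ω : Type*} [MeasurableSpace Ω] (μ : Measure Ω) [IsFiniteMeasure μ]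
    (E : Ω → ℝ) (hE : Measurable E) (A : Set Ω)
    (w : ℝ → ℝ) (hw : Continuous w) (hw0 : ∀ x ∈ Set.Icc (0:ℝ) 1, 0 ≤ w x)
    (hj : ∀ S : Set ℝ, MeasurableSet S →
      μ (E ⁻¹' S ∩ A) = ENNReal.ofReal (∫ ε in S ∩ Set.Icc (0:ℝ) 1, w ε))
    (φ : ℝ → ℝ) (hφ : Continuous φ) :
    ∫ ω in A, φ (E ω) ∂μ = ∫ ε in Set.Icc (0:ℝ) 1, φ ε * w ε := by
  have hν : Measure.map E (μ.restrict A)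
      = (volume.restrict (Set.Icc (0:ℝ) 1)).withDensity (fun ε => ENNReal.ofReal (w ε)) := by
    ext S hS
    rw [Measure.map_apply hE hS, Measure.restrict_apply (hE hS), hj S hS,
      withDensity_apply _ hS, Measure.restrict_restrict hS]
    rw [← MeasureTheory.ofReal_integral_eq_lintegral_ofReal]
    · exact (hw.integrableOn_Icc).mono_set Set.inter_subset_right
    · exact ae_restrict_of_forall_mem (hS.inter measurableSet_Icc) (fun x hx => hw0 x hx.2)
  calc ∫ ω in A, φ (E ω) ∂μ
      = ∫ x, φ x ∂(Measure.map E (μ.restrict A)) :=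
        (integral_map hE.aemeasurable hφ.aestronglyMeasurable).symm
    _ = ∫ x, φ x ∂((volume.restrict (Set.Icc (0:ℝ) 1)).withDensity
          (fun ε => ENNReal.ofReal (w ε))) := by rw [hν]
    _ = ∫ ε in Set.Icc (0:ℝ) 1, φ ε * w ε := by
        have h1 : (fun ε => ENNReal.ofReal (w ε)) = (fun ε => ((w ε).toNNReal : ℝ≥0∞)) := rfl
        rw [h1, integral_withDensity_eq_integral_smul
          (f := fun ε => (w ε).toNNReal) hw.measurable.real_toNNReal φ]
        apply setIntegral_congr_fun measurableSet_Icc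
        intro x hx
        simp [NNReal.smul_def, Real.coe_toNNReal _ (hw0 x hx)]
        ring

end Stmt12

open Stmt12

theorem stmt_12 {Ω : Type*} [m0 : MeasurableSpace Ω] (μ : Measure Ω) [IsProbabilityMeasure μ]
    (n : ℕ) (hn : 0 < n)
    (E : Ω → ℝ) (B : Fin n → Ω → ℝ)
    (hE : Measurable E) (hB : ∀ i, Measurable (B i))
    (hB01 : ∀ i ω, B i ω = 0 ∨ B i ω = 1)
    (hjoint : ∀ (b : Fin n → Bool) (S : Set ℝ), MeasurableSet S →
      μ {ω | E ω ∈ S ∧ ∀ i, B i ω = (if b i then (1:ℝ) else 0)} =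
        ENNReal.ofReal (∫ ε in S ∩ Set.Icc (0:ℝ) 1,
          ε ^ (Finset.univ.filter fun i => b i = true).card *
            (1 - ε) ^ (Finset.univ.filter fun i => b i = false).card)) :
    ∫ ε in Set.Icc (0:ℝ) 1,
        (ε * (1 - ε) / n - (1 / ((n : ℝ) / 2 + 1)) * Real.sqrt (ε * (1 - ε) / n))
      ≤ ∫ ω, (E ω - MeasureTheory.condExp
          (MeasurableSpace.comap (fun ω' => fun i => B i ω') inferInstance) μ E ω)^2 ∂μ := by
  classical
  set f : Ω → (Fin n → ℝ) := fun ω' => fun i => B i ω' with hf_def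
  have hf : Measurable f := measurable_pi_lambda _ hB
  set vec : (Fin n → Bool) → (Fin n → ℝ) := fun b i => if b i then 1 else 0 with hvec_def
  set A : (Fin n → Bool) → Set Ω := fun b => {ω | ∀ i, B i ω = vec b i} with hA_def
  have hA : ∀ b, MeasurableSet (A b) := by
    intro b
    have : A b = ⋂ i, (B i) ⁻¹' {vec b i} := by
      ext ω; simp [hA_def, Set.mem_iInter]
    rw [this]
    exact MeasurableSet.iInter fun i => hB i (measurableSet_singleton _)
  have hjoint' : ∀ (b : Fin n → Bool) (S : Set ℝ), MeasurableSet S →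
      μ (E ⁻¹' S ∩ A b) = ENNReal.ofReal (∫ ε in S ∩ Set.Icc (0:ℝ) 1, w b ε) := by
    intro b S hS
    have h1 : E ⁻¹' S ∩ A b = {ω | E ω ∈ S ∧ ∀ i, B i ω = (if b i then (1:ℝ) else 0)} := rfl
    rw [h1, hjoint b S hS]
    rfl
  -- atoms cover Ω
  have hmem : ∀ ω, ω ∈ A (fun i => if B i ω = 1 then true else false) := by
    intro ω i
    rcases hB01 i ω with h | h <;> simp [hvec_def, h]
  have hcover : (⋃ b, A b) = Set.univ := by
    ext ω
    simp only [Set.mem_iUnion, Set.mem_univ, iff_true]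
    exact ⟨_, hmem ω⟩
  have hdisj : Pairwise (Function.onFun Disjoint A) := by
    intro b b' hbb
    obtain ⟨i, hi⟩ := Function.ne_iff.mp hbb
    rw [Function.onFun, Set.disjoint_left]
    intro ω hω hω'
    have h1 := hω i
    have h2 := hω' i
    rw [h1] at h2
    cases hb : b i <;> cases hb' : b' i <;> simp [hb, hb', hvec_def] at h2 hi <;> tauto
  -- splitting integrals over atoms
  have hsplit : ∀ (s : Set Ω), MeasurableSet s → ∀ (h : Ω → ℝ), Integrable h μ →
      ∫ ω in s, h ω ∂μ = ∑ b : Fin n → Bool, ∫ ω in s ∩ A b, h ω ∂μ := by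
    intro s hs h hh
    have h1 : s = ⋃ b, s ∩ A b := by rw [← Set.inter_iUnion, hcover, Set.inter_univ]
    calc ∫ ω in s, h ω ∂μ = ∫ ω in ⋃ b, s ∩ A b, h ω ∂μ := by rw [← h1]
      _ = ∑' b : Fin n → Bool, ∫ ω in s ∩ A b, h ω ∂μ :=
          integral_iUnion (fun b => hs.inter (hA b))
            (hdisj.mono fun b b' hd => hd.mono Set.inter_subset_right Set.inter_subset_right)
            hh.integrableOn
      _ = ∑ b : Fin n → Bool, ∫ ω in s ∩ A b, h ω ∂μ := tsum_fintype _
  -- measure splits over atoms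
  have hmeassplit : ∀ (s : Set Ω), MeasurableSet s →
      μ s = ∑ b : Fin n → Bool, μ (s ∩ A b) := by
    intro s hs
    have h1 : s = ⋃ b, s ∩ A b := by rw [← Set.inter_iUnion, hcover, Set.inter_univ]
    calc μ s = μ (⋃ b, s ∩ A b) := by rw [← h1]
      _ = ∑' b : Fin n → Bool, μ (s ∩ A b) :=
          measure_iUnion
            (hdisj.mono fun b b' hd => hd.mono Set.inter_subset_right Set.inter_subset_right)
            (fun b => hs.inter (hA b))
      _ = ∑ b : Fin n → Bool, μ (s ∩ A b) := tsum_fintype _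
  -- E ∈ [0,1] a.e.
  have hEae : ∀ᵐ ω ∂μ, E ω ∈ Set.Icc (0:ℝ) 1 := by
    have h0 : μ (E ⁻¹' (Set.Icc (0:ℝ) 1)ᶜ) = 0 := by
      rw [hmeassplit _ (hE measurableSet_Icc.compl)]
      apply Finset.sum_eq_zero
      intro b _
      rw [hjoint' b _ measurableSet_Icc.compl, Set.compl_inter_self]
      simp
    rw [ae_iff]
    convert h0 using 2
    rfl
  have hEint : Integrable E μ := by
    apply Integrable.mono' (integrable_const (1:ℝ)) hE.aestronglyMeasurable
    filter_upwards [hEae] with ω hω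
    rw [Real.norm_eq_abs, abs_le]
    exact ⟨by linarith [hω.1], hω.2⟩
  -- the conditional mean function
  set g : Ω → ℝ := fun ω => ((∑ i, B i ω) + 1) / ((n:ℝ) + 2) with hg_def
  set c : (Fin n → Bool) → ℝ := fun b => ((kT b : ℝ) + 1) / ((n:ℝ) + 2) with hc_def
  have hgA : ∀ b : Fin n → Bool, ∀ ω ∈ A b, g ω = c b := by
    intro b ω hω
    have h1 : ∀ i, B i ω = vec b i := hω
    have h2 : (∑ i, B i ω) = (kT b : ℝ) := by
      rw [Finset.sum_congr rfl (fun i _ => h1 i)]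
      simp [hvec_def, kT]
    simp only [hg_def, hc_def]
    rw [h2]
  have hBb : ∀ i ω, 0 ≤ B i ω ∧ B i ω ≤ 1 := by
    intro i ω
    rcases hB01 i ω with h | h <;> simp [h]
  have hgbound : ∀ ω, 0 ≤ g ω ∧ g ω ≤ 1 := by
    intro ω
    have h1 : 0 ≤ ∑ i, B i ω := Finset.sum_nonneg fun i _ => (hBb i ω).1
    have h2 : (∑ i, B i ω) ≤ n := by
      calc (∑ i, B i ω) ≤ ∑ _i : Fin n, (1:ℝ) := Finset.sum_le_sum fun i _ => (hBb i ω).2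
        _ = n := by simp
    constructor
    · apply div_nonneg (by linarith) (by positivity)
    · rw [div_le_one (by positivity)]
      linarith
  have hgmeas : Measurable g :=
    ((Finset.measurable_sum Finset.univ fun i _ => hB i).add_const 1).div_const _
  have hgint : Integrable g μ := by
    apply Integrable.mono' (integrable_const (1:ℝ)) hgmeas.aestronglyMeasurable
    filter_upwards with ω
    rw [Real.norm_eq_abs, abs_le]
    exact ⟨by linarith [(hgbound ω).1], (hgbound ω).2⟩
  -- per-atom integral machinery
  have hw0 : ∀ (b : Fin n → Bool), ∀ x ∈ Set.Icc (0:ℝ) 1, 0 ≤ w b x := by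
    intro b x hx
    exact mul_nonneg (pow_nonneg hx.1 _) (pow_nonneg (by linarith [hx.2]) _)
  have master : ∀ (b : Fin n → Bool) (φ : ℝ → ℝ), Continuous φ →
      ∫ ω in A b, φ (E ω) ∂μ = ∫ ε in Set.Icc (0:ℝ) 1, φ ε * w b ε :=
    fun b φ hφ => atom_integral μ E hE (A b) (w b) (cont_pq _ _) (hw0 b) (hjoint' b) φ hφ
  set J0 : (Fin n → Bool) → ℝ := fun b => ∫ ε in Set.Icc (0:ℝ) 1, w b ε with hJ0_def
  have hJ0nn : ∀ b, 0 ≤ J0 b := fun b =>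
    setIntegral_nonneg measurableSet_Icc (hw0 b)
  have hμA : ∀ b, μ (A b) = ENNReal.ofReal (J0 b) := by
    intro b
    have h1 := hjoint' b Set.univ MeasurableSet.univ
    rw [Set.preimage_univ, Set.univ_inter] at h1
    rw [h1, Set.univ_inter]
  have hbeta : ∀ b : Fin n → Bool, ∫ ε in Set.Icc (0:ℝ) 1, ε * w b ε = c b * J0 b := by
    intro b
    have h1 : ∀ ε : ℝ, ε * w b ε = ε ^ (kT b + 1) * (1 - ε) ^ (kF b) := by
      intro ε
      rw [w, pow_succ]
      ring
    rw [show (∫ ε in Set.Icc (0:ℝ) 1, ε * w b ε)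
        = ∫ ε in Set.Icc (0:ℝ) 1, ε ^ (kT b + 1) * (1 - ε) ^ (kF b) from by
      exact setIntegral_congr_fun measurableSet_Icc fun x _ => h1 x]
    rw [beta_step (kT b) (kF b)]
    have h2 : ((kT b : ℝ) + (kF b : ℝ) + 2) = (n:ℝ) + 2 := by
      have := kT_add_kF b
      push_cast [← this]
      ring
    rw [h2, hc_def, hJ0_def]
    rfl
  have hEatom : ∀ b : Fin n → Bool, ∫ ω in A b, E ω ∂μ = c b * J0 b := by
    intro b
    have h1 := master b (fun x => x) continuous_id
    simpa using h1.trans (by rw [← hbeta b])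
  have hgatom : ∀ b : Fin n → Bool, ∫ ω in A b, g ω ∂μ = c b * J0 b := by
    intro b
    rw [setIntegral_congr_fun (hA b) (fun ω hω => hgA b ω hω), setIntegral_const,
      measureReal_def, hμA b, ENNReal.toReal_ofReal (hJ0nn b), smul_eq_mul, mul_comm]
  -- condexp identification
  have hm_le : MeasurableSpace.comap f inferInstance ≤ m0 := hf.comap_le
  have hgm : AEStronglyMeasurable[MeasurableSpace.comap f inferInstance] g μ := by
    have hψ : Measurable (fun v : Fin n → ℝ => ((∑ i, v i) + 1) / ((n:ℝ) + 2)) :=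
      ((Finset.measurable_sum Finset.univ fun i _ => measurable_pi_apply i).add_const 1).div_const _
    have hfm : Measurable[MeasurableSpace.comap f inferInstance] f :=
      Measurable.of_comap_le le_rfl
    have : Measurable[MeasurableSpace.comap f inferInstance] g := hψ.comp hfm
    exact this.stronglyMeasurable.aestronglyMeasurable
  have hg_eq : ∀ s : Set Ω, MeasurableSet[MeasurableSpace.comap f inferInstance] s →
      μ s < ⊤ → ∫ ω in s, g ω ∂μ = ∫ ω in s, E ω ∂μ := by
    rintro s ⟨S, hS, rfl⟩ _
    have hsm : MeasurableSet (f ⁻¹' S) := hf hS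
    rw [hsplit _ hsm g hgint, hsplit _ hsm E hEint]
    apply Finset.sum_congr rfl
    intro b _
    have hatomcase : f ⁻¹' S ∩ A b = if vec b ∈ S then A b else ∅ := by
      split_ifs with hv
      · apply Set.Subset.antisymm Set.inter_subset_right
        intro ω hω
        have h1 : f ω = vec b := funext hω
        exact ⟨by rw [Set.mem_preimage, h1]; exact hv, hω⟩
      · apply Set.eq_empty_of_forall_notMem
        rintro ω ⟨h1, h2⟩
        have h3 : f ω = vec b := funext h2
        rw [Set.mem_preimage, h3] at h1
        exact hv h1
    rw [hatomcase]
    split_ifs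
    · rw [hgatom b, hEatom b]
    · simp
  have hcond : g =ᵐ[μ] MeasureTheory.condExp (MeasurableSpace.comap f inferInstance) μ E :=
    ae_eq_condExp_of_forall_setIntegral_eq hm_le hEint
      (fun s _ _ => hgint.integrableOn) hg_eq hgm
  -- final computation
  have hsq_ae : (fun ω => (E ω - MeasureTheory.condExp (MeasurableSpace.comap f inferInstance) μ E ω)^2)
      =ᵐ[μ] fun ω => (E ω - g ω)^2 := by
    filter_upwards [hcond] with ω hω
    rw [← hω]
  rw [integral_congr_ae hsq_ae]
  have hsqint : Integrable (fun ω => (E ω - g ω)^2) μ := by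
    apply Integrable.mono' (integrable_const (1:ℝ))
      ((hE.sub hgmeas).pow_const 2).aestronglyMeasurable
    filter_upwards [hEae] with ω hω
    have h2 := hgbound ω
    rw [Real.norm_eq_abs, abs_le]
    constructor
    · nlinarith [sq_nonneg (E ω - g ω)]
    · change (E ω - g ω)^2 ≤ 1
      nlinarith [hω.1, hω.2]
  have hchain : ∫ ω, (E ω - g ω)^2 ∂μ
      = ∫ ε in Set.Icc (0:ℝ) 1, ∑ b : Fin n → Bool, (ε - c b)^2 * w b ε := by
    calc ∫ ω, (E ω - g ω)^2 ∂μ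
        = ∫ ω in Set.univ, (E ω - g ω)^2 ∂μ := setIntegral_univ.symm
      _ = ∑ b : Fin n → Bool, ∫ ω in Set.univ ∩ A b, (E ω - g ω)^2 ∂μ :=
          hsplit _ MeasurableSet.univ _ hsqint
      _ = ∑ b : Fin n → Bool, ∫ ε in Set.Icc (0:ℝ) 1, (ε - c b)^2 * w b ε := by
          apply Finset.sum_congr rfl
          intro b _
          rw [Set.univ_inter]
          rw [setIntegral_congr_fun (hA b)
            (show Set.EqOn (fun ω => (E ω - g ω)^2) (fun ω => (E ω - c b)^2) (A b) from
              fun ω hω => by simp only; rw [hgA b ω hω])]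
          exact master b (fun x => (x - c b)^2)
            ((continuous_id.sub continuous_const).pow 2)
      _ = ∫ ε in Set.Icc (0:ℝ) 1, ∑ b : Fin n → Bool, (ε - c b)^2 * w b ε :=
          (integral_finset_sum Finset.univ fun b _ =>
            (((continuous_id.sub continuous_const).pow 2).mul (cont_pq _ _)).integrableOn_Icc).symm
  rw [hchain]
  apply setIntegral_mono_on
  · apply Continuous.integrableOn_Icc
    have h1 : Continuous (fun ε : ℝ => ε * (1 - ε) / (n:ℝ)) :=
      (continuous_id.mul (continuous_const.sub continuous_id)).div_const _
    exact h1.sub (continuous_const.mul (Real.continuous_sqrt.comp h1))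
  · exact integrable_finset_sum Finset.univ fun b _ =>
      (((continuous_id.sub continuous_const).pow 2).mul (cont_pq _ _)).integrableOn_Icc
  · exact measurableSet_Icc
  · intro ε hε
    exact pointwise_bound hn hε
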